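/- For a 2×2 positive definite real symmetric matrix G with entries g₁, g₂ (off-diagonal), g₃, and real parameters r ∈ (0,1), φ ∈ [0,π/2], the function f(t,s) = tr G + g₁(t + (g₂/g₁)s)² + (det G / g₁)·s² + 2r·|cos φ − s·sin φ|·√(det G) over (t,s) ∈ ℝ² attains its minimum value: (a) tr G + 2r cos φ √(det G) − r² sin²φ · g₁, achieved at t = −(g₂/g₁)s, s = r g₁ sin φ/√(det G), provided g₁/√(det G) < cos φ/(r sin²φ); (b) tr G + (det G/g₁)(cos φ/sin φ)², achieved at t = −(g₂/g₁)s, s = cos φ/sin φ, otherwise (assuming sin φ ≠ 0). -/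

import Mathlib

open Real

set_option maxHeartbeats 1000000

theorem stmt_3 (g1 g2 g3 r φ : ℝ) (hg1 : 0 < g1) (hdet : 0 < g1 * g3 - g2 ^ 2)
    (hr0 : 0 < r) (hr1 : r < 1) (hφ0 : 0 ≤ φ) (hφ1 : φ ≤ Real.pi / 2)
    (f : ℝ → ℝ → ℝ)
    (hf : f = fun t s => (g1 + g3) + g1 * (t + (g2 / g1) * s) ^ 2
      + ((g1 * g3 - g2 ^ 2) / g1) * s ^ 2
      + 2 * r * |Real.cos φ - s * Real.sin φ| * Real.sqrt (g1 * g3 - g2 ^ 2)) :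
    (g1 / Real.sqrt (g1 * g3 - g2 ^ 2) < Real.cos φ / (r * (Real.sin φ) ^ 2) →
      (IsLeast (Set.range fun p : ℝ × ℝ => f p.1 p.2)
        ((g1 + g3) + 2 * r * Real.cos φ * Real.sqrt (g1 * g3 - g2 ^ 2)
          - r ^ 2 * (Real.sin φ) ^ 2 * g1) ∧
      f (-(g2 / g1) * (r * g1 * Real.sin φ / Real.sqrt (g1 * g3 - g2 ^ 2)))
        (r * g1 * Real.sin φ / Real.sqrt (g1 * g3 - g2 ^ 2))
        = (g1 + g3) + 2 * r * Real.cos φ * Real.sqrt (g1 * g3 - g2 ^ 2)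
          - r ^ 2 * (Real.sin φ) ^ 2 * g1)) ∧
    (¬ (g1 / Real.sqrt (g1 * g3 - g2 ^ 2) < Real.cos φ / (r * (Real.sin φ) ^ 2)) →
      0 < Real.sin φ →
      (IsLeast (Set.range fun p : ℝ × ℝ => f p.1 p.2)
        ((g1 + g3) + ((g1 * g3 - g2 ^ 2) / g1) * (Real.cos φ / Real.sin φ) ^ 2) ∧
      f (-(g2 / g1) * (Real.cos φ / Real.sin φ)) (Real.cos φ / Real.sin φ)
        = (g1 + g3) + ((g1 * g3 - g2 ^ 2) / g1) * (Real.cos φ / Real.sin φ) ^ 2)) := by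
  have hσ0 : 0 ≤ Real.sin φ := Real.sin_nonneg_of_nonneg_of_le_pi hφ0 (by linarith [Real.pi_pos])
  have hc0 : 0 ≤ Real.cos φ := Real.cos_nonneg_of_mem_Icc ⟨by linarith [Real.pi_pos], hφ1⟩
  have hDpos : 0 < Real.sqrt (g1 * g3 - g2 ^ 2) := Real.sqrt_pos.mpr hdet
  set c := Real.cos φ with hcdef
  set σ := Real.sin φ with hσdef
  set D := Real.sqrt (g1 * g3 - g2 ^ 2) with hDdef
  have hD2 : D ^ 2 = g1 * g3 - g2 ^ 2 := Real.sq_sqrt hdet.le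
  clear_value c σ D
  constructor
  · -- case (a)
    intro hcond
    have hσpos : 0 < σ := by
      rcases hσ0.lt_or_eq with h | h
      · exact h
      · exfalso
        rw [← h] at hcond
        norm_num at hcond
        exact absurd hcond (not_lt.mpr (div_pos hg1 hDpos).le)
    have hrσ : 0 < r * σ ^ 2 := by positivity
    have key : g1 * (r * σ ^ 2) < c * D := (div_lt_div_iff₀ hDpos hrσ).mp hcond
    have hcpos : 0 < c := by nlinarith
    have habs : 0 ≤ c - (r * g1 * σ / D) * σ := by
      rw [sub_nonneg, div_mul_eq_mul_div, div_le_iff₀ hDpos]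
      nlinarith
    have heq : f (-(g2 / g1) * (r * g1 * σ / D)) (r * g1 * σ / D)
        = (g1 + g3) + 2 * r * c * D - r ^ 2 * σ ^ 2 * g1 := by
      simp only [hf]
      rw [abs_of_nonneg habs, ← hD2]
      field_simp
      ring
    refine ⟨⟨⟨⟨_, _⟩, heq⟩, ?_⟩, heq⟩
    rintro x ⟨⟨t, s⟩, rfl⟩
    simp only [hf]
    rw [← hD2]
    have hq : 0 ≤ g1 * (t + g2 / g1 * s) ^ 2 := by positivity
    have hσ2 : (0:ℝ) < σ ^ 2 := by positivity
    have key2a : (2 * r * c * D - r ^ 2 * σ ^ 2 * g1 - 2 * r * |c - s * σ| * D) * g1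
        ≤ D ^ 2 * s ^ 2 := by
      rcases le_or_gt 0 (c - s * σ) with h | h
      · rw [abs_of_nonneg h]
        nlinarith [sq_nonneg (D * s - r * σ * g1)]
      · rw [abs_of_neg h]
        have hsc : 0 < s * σ - c := by linarith
        have h1 : 0 ≤ D ^ 2 * (s * σ - c) * (s * σ + c) :=
          mul_nonneg (mul_nonneg (sq_nonneg D) hsc.le) (by linarith)
        have h2 : 0 ≤ 2 * r * D * σ ^ 2 * g1 * (s * σ - c) := by
          have : (0:ℝ) ≤ 2 * r * D * σ ^ 2 * g1 := by positivity
          exact mul_nonneg this hsc.le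
        have h3 : 0 ≤ (D * c - r * σ ^ 2 * g1) ^ 2 := sq_nonneg _
        have hX : 0 * σ ^ 2 ≤ (D ^ 2 * s ^ 2
            - (2 * r * c * D - r ^ 2 * σ ^ 2 * g1 - 2 * r * (-(c - s * σ)) * D) * g1) * σ ^ 2 := by
          have e : (D ^ 2 * s ^ 2
              - (2 * r * c * D - r ^ 2 * σ ^ 2 * g1 - 2 * r * (-(c - s * σ)) * D) * g1) * σ ^ 2
              = D ^ 2 * (s * σ - c) * (s * σ + c) + 2 * r * D * σ ^ 2 * g1 * (s * σ - c)
                + (D * c - r * σ ^ 2 * g1) ^ 2 := by ring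
          rw [e, zero_mul]
          linarith
        have := le_of_mul_le_mul_right hX hσ2
        linarith
    have h3 : 2 * r * c * D - r ^ 2 * σ ^ 2 * g1 - 2 * r * |c - s * σ| * D
        ≤ D ^ 2 * s ^ 2 / g1 := (le_div_iff₀ hg1).mpr key2a
    have e1 : D ^ 2 * s ^ 2 / g1 = D ^ 2 / g1 * s ^ 2 := by ring
    linarith [hq, h3, e1.le, e1.ge]
  · -- case (b)
    intro hcond hσpos
    have hrσ : 0 < r * σ ^ 2 := by positivity
    have key : c * D ≤ g1 * (r * σ ^ 2) := (div_le_div_iff₀ hrσ hDpos).mp (not_lt.mp hcond)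
    have heq : f (-(g2 / g1) * (c / σ)) (c / σ)
        = (g1 + g3) + (g1 * g3 - g2 ^ 2) / g1 * (c / σ) ^ 2 := by
      simp only [hf]
      have h0 : c - c / σ * σ = 0 := by field_simp; ring
      rw [h0, abs_zero]
      ring
    refine ⟨⟨⟨⟨_, _⟩, heq⟩, ?_⟩, heq⟩
    rintro x ⟨⟨t, s⟩, rfl⟩
    simp only [hf]
    rw [← hD2]
    have hq : 0 ≤ g1 * (t + g2 / g1 * s) ^ 2 := by positivity
    have key2 : D ^ 2 * c ^ 2
        ≤ (D ^ 2 * s ^ 2 + 2 * r * |c - s * σ| * D * g1) * σ ^ 2 := by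
      rcases le_or_gt 0 (c - s * σ) with h | h
      · rw [abs_of_nonneg h]
        have h1 : 0 ≤ D ^ 2 * (s * σ - c) ^ 2 := by positivity
        have h2 : 0 ≤ 2 * D * (c - s * σ) * (g1 * (r * σ ^ 2) - c * D) :=
          mul_nonneg (mul_nonneg (by positivity) h) (by linarith)
        have e : (D ^ 2 * s ^ 2 + 2 * r * (c - s * σ) * D * g1) * σ ^ 2 - D ^ 2 * c ^ 2
            = D ^ 2 * (s * σ - c) ^ 2 + 2 * D * (c - s * σ) * (g1 * (r * σ ^ 2) - c * D) := by
          ring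
        linarith [h1, h2, e.le, e.ge]
      · rw [abs_of_neg h]
        have hsc : 0 < s * σ - c := by linarith
        have h1 : 0 ≤ D ^ 2 * (s * σ - c) * (s * σ + c) :=
          mul_nonneg (mul_nonneg (sq_nonneg D) hsc.le) (by linarith)
        have h2 : 0 ≤ 2 * r * (s * σ - c) * D * g1 * σ ^ 2 := by
          have hx : (0:ℝ) ≤ 2 * r * D * g1 * σ ^ 2 := by positivity
          nlinarith [mul_nonneg hx hsc.le]
        have e : (D ^ 2 * s ^ 2 + 2 * r * (-(c - s * σ)) * D * g1) * σ ^ 2 - D ^ 2 * c ^ 2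
            = D ^ 2 * (s * σ - c) * (s * σ + c) + 2 * r * (s * σ - c) * D * g1 * σ ^ 2 := by
          ring
        linarith [h1, h2, e.le, e.ge]
    have hgσ : 0 < g1 * σ ^ 2 := by positivity
    have h3 : D ^ 2 * c ^ 2 / (g1 * σ ^ 2)
        ≤ (D ^ 2 * s ^ 2 + 2 * r * |c - s * σ| * D * g1) * σ ^ 2 / (g1 * σ ^ 2) := by
      gcongr
    have e1 : D ^ 2 / g1 * (c / σ) ^ 2 = D ^ 2 * c ^ 2 / (g1 * σ ^ 2) := by
      ring
    have e2 : (D ^ 2 * s ^ 2 + 2 * r * |c - s * σ| * D * g1) * σ ^ 2 / (g1 * σ ^ 2)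
        = D ^ 2 / g1 * s ^ 2 + 2 * r * |c - s * σ| * D := by
      field_simp
    linarith [hq, h3, e1.le, e1.ge, e2.le, e2.ge]
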